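/- For ε ∈ Sym₂(ℝ²) and ϑ ∈ ℝ², define h(ε,ϑ) = sup over ψ ∈ ℝ and unit vectors τ ∈ ℝ² of (ε:(τ⊗τ) + ψ·(ϑ·τ))/(1 + ψ²). Then h(ε,ϑ) ≤ 1 if and only if (1/4)·ϑ⊗ϑ + ε ⪯ I. -/

import Mathlib

open Matrix

/-- Frobenius inner product of 2×2 matrices. -/
def frob2 (A B : Matrix (Fin 2) (Fin 2) ℝ) : ℝ := ∑ i, ∑ j, A i j * B i j

lemma abs_le_one_of_sq (t : ℝ) (h : t^2 ≤ 1) : |t| ≤ 1 := by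
  nlinarith [sq_abs t, abs_nonneg t, sq_nonneg (|t| - 1)]

lemma aux_prod_le (e s u : ℝ) (hs : |s| ≤ 1) (hu : |u| ≤ 1) : e*(s*u) ≤ |e| := by
  calc e*(s*u) ≤ |e*(s*u)| := le_abs_self _
    _ = |e| * (|s| * |u|) := by rw [abs_mul, abs_mul]
    _ ≤ |e| * 1 := by
        refine mul_le_mul_of_nonneg_left ?_ (abs_nonneg e)
        calc |s| * |u| ≤ 1*1 := mul_le_mul hs hu (abs_nonneg u) zero_le_one
          _ = 1 := mul_one 1
    _ = |e| := mul_one _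

lemma aux_bound (e00 e01 e10 e11 v0 v1 ψ t0 t1 : ℝ) (ht : t0^2 + t1^2 ≤ 1) :
    (e00*(t0*t0) + e01*(t0*t1) + e10*(t1*t0) + e11*(t1*t1) + ψ*(v0*t0+v1*t1))/(1+ψ^2)
      ≤ |e00|+|e01|+|e10|+|e11| + (|v0|+|v1|)/2 := by
  have h0 : t0^2 ≤ 1 := by nlinarith [sq_nonneg t1]
  have h1 : t1^2 ≤ 1 := by nlinarith [sq_nonneg t0]
  have a0 : |t0| ≤ 1 := abs_le_one_of_sq _ h0
  have a1 : |t1| ≤ 1 := abs_le_one_of_sq _ h1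
  have hb : |v0*t0+v1*t1| ≤ |v0|+|v1| := by
    calc |v0*t0+v1*t1| ≤ |v0*t0|+|v1*t1| := abs_add_le _ _
      _ = |v0| * |t0| + |v1| * |t1| := by rw [abs_mul, abs_mul]
      _ ≤ |v0| * 1 + |v1| * 1 :=
          add_le_add (mul_le_mul_of_nonneg_left a0 (abs_nonneg v0))
            (mul_le_mul_of_nonneg_left a1 (abs_nonneg v1))
      _ = |v0| + |v1| := by ring
  have hψ : ψ*(v0*t0+v1*t1) ≤ (1+ψ^2)*((|v0|+|v1|)/2) := by
    have h1 : ψ*(v0*t0+v1*t1) ≤ |ψ| * |v0*t0+v1*t1| := by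
      calc ψ*(v0*t0+v1*t1) ≤ |ψ*(v0*t0+v1*t1)| := le_abs_self _
        _ = |ψ| * |v0*t0+v1*t1| := abs_mul _ _
    nlinarith [abs_nonneg ψ, sq_abs ψ, sq_nonneg (|ψ|-1), abs_nonneg (v0*t0+v1*t1), hb]
  rw [div_le_iff₀ (by positivity)]
  have hA0 : e00*(t0*t0) ≤ |e00| := aux_prod_le _ _ _ a0 a0
  have hA1 : e01*(t0*t1) ≤ |e01| := aux_prod_le _ _ _ a0 a1
  have hA2 : e10*(t1*t0) ≤ |e10| := aux_prod_le _ _ _ a1 a0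
  have hA3 : e11*(t1*t1) ≤ |e11| := aux_prod_le _ _ _ a1 a1
  nlinarith [hA0, hA1, hA2, hA3, hψ, sq_nonneg ψ,
    mul_nonneg (by positivity : (0:ℝ) ≤ |e00|+|e01|+|e10|+|e11|) (sq_nonneg ψ)]

lemma key_bwd (e00 e01 e10 e11 v0 v1 : ℝ)
    (h : ∀ x0 x1 : ℝ, e00*(x0*x0)+e01*(x0*x1)+e10*(x1*x0)+e11*(x1*x1)
          +(v0*x0+v1*x1)^2/4 ≤ x0^2+x1^2)
    (ψ t0 t1 : ℝ) (ht : t0^2 + t1^2 ≤ 1) :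
    e00*(t0*t0)+e01*(t0*t1)+e10*(t1*t0)+e11*(t1*t1)+ψ*(v0*t0+v1*t1) ≤ 1+ψ^2 := by
  nlinarith [h t0 t1, sq_nonneg (ψ - (v0*t0+v1*t1)/2)]

lemma key_fwd (e00 e01 e10 e11 v0 v1 : ℝ)
    (h : ∀ ψ t0 t1 : ℝ, t0^2+t1^2 ≤ 1 →
      e00*(t0*t0)+e01*(t0*t1)+e10*(t1*t0)+e11*(t1*t1)+ψ*(v0*t0+v1*t1) ≤ 1+ψ^2)
    (x0 x1 : ℝ) :
    e00*(x0*x0)+e01*(x0*x1)+e10*(x1*x0)+e11*(x1*x1)+(v0*x0+v1*x1)^2/4 ≤ x0^2+x1^2 := by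
  by_cases hz : x0 = 0 ∧ x1 = 0
  · obtain ⟨h0, h1⟩ := hz; subst h0; subst h1; norm_num
  · have hn : 0 < x0^2 + x1^2 := by
      rcases not_and_or.mp hz with h'|h'
      · have : 0 < x0^2 := by positivity
        nlinarith [sq_nonneg x1]
      · have : 0 < x1^2 := by positivity
        nlinarith [sq_nonneg x0]
    obtain ⟨r, hr0, hr2⟩ : ∃ r : ℝ, 0 < r ∧ r^2 = x0^2+x1^2 :=
      ⟨Real.sqrt (x0^2+x1^2), Real.sqrt_pos.mpr hn, Real.sq_sqrt hn.le⟩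
    obtain ⟨t0, rfl⟩ : ∃ t, x0 = r*t := ⟨x0/r, by field_simp⟩
    obtain ⟨t1, rfl⟩ : ∃ t, x1 = r*t := ⟨x1/r, by field_simp⟩
    have htt : t0^2 + t1^2 = 1 := by
      have h2 : r^2*(t0^2+t1^2) = r^2*1 := by linear_combination -hr2
      exact mul_left_cancel₀ (by positivity) h2
    have key := h ((v0*t0+v1*t1)/2) t0 t1 htt.le
    have htt2 : r^2*(t0^2+t1^2) = r^2 := by rw [htt, mul_one]
    nlinarith [mul_le_mul_of_nonneg_left key (sq_nonneg r), htt2, sq_nonneg r]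

theorem stmt3 (ε : Matrix (Fin 2) (Fin 2) ℝ) (ϑ : Fin 2 → ℝ) (hε : ε.IsHermitian) :
    sSup {x : ℝ | ∃ ψ : ℝ, ∃ τ : Fin 2 → ℝ, (∑ i, τ i ^ 2) ≤ 1 ∧
        x = (frob2 ε (Matrix.vecMulVec τ τ) + ψ * (ϑ ⬝ᵥ τ)) / (1 + ψ ^ 2)} ≤ 1 ↔
      ((1 : Matrix (Fin 2) (Fin 2) ℝ) -
        ((1/4 : ℝ) • Matrix.vecMulVec ϑ ϑ + ε)).PosSemidef := by
  have he : ε 1 0 = ε 0 1 := by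
    have := congrFun (congrFun hε 0) 1
    simpa using this
  have hfr : ∀ τ : Fin 2 → ℝ, frob2 ε (Matrix.vecMulVec τ τ)
      = ε 0 0*(τ 0*τ 0)+ε 0 1*(τ 0*τ 1)+ε 1 0*(τ 1*τ 0)+ε 1 1*(τ 1*τ 1) := by
    intro τ
    simp [frob2, Fin.sum_univ_two, Matrix.vecMulVec_apply]
    ring
  have hdp : ∀ τ : Fin 2 → ℝ, ϑ ⬝ᵥ τ = ϑ 0*τ 0 + ϑ 1*τ 1 := by
    intro τ
    simp [dotProduct, Fin.sum_univ_two]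
  have hne : Set.Nonempty {x : ℝ | ∃ ψ : ℝ, ∃ τ : Fin 2 → ℝ, (∑ i, τ i ^ 2) ≤ 1 ∧
      x = (frob2 ε (Matrix.vecMulVec τ τ) + ψ * (ϑ ⬝ᵥ τ)) / (1 + ψ ^ 2)} := by
    refine ⟨(frob2 ε (Matrix.vecMulVec 0 0) + 0 * (ϑ ⬝ᵥ 0)) / (1 + (0:ℝ) ^ 2), 0, 0, ?_, rfl⟩
    simp
  have hbdd : BddAbove {x : ℝ | ∃ ψ : ℝ, ∃ τ : Fin 2 → ℝ, (∑ i, τ i ^ 2) ≤ 1 ∧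
      x = (frob2 ε (Matrix.vecMulVec τ τ) + ψ * (ϑ ⬝ᵥ τ)) / (1 + ψ ^ 2)} := by
    refine ⟨|ε 0 0|+|ε 0 1|+|ε 1 0|+|ε 1 1| + (|ϑ 0|+|ϑ 1|)/2, ?_⟩
    rintro x ⟨ψ, τ, hτ, rfl⟩
    rw [Fin.sum_univ_two] at hτ
    rw [hfr, hdp]
    exact aux_bound _ _ _ _ _ _ _ _ _ hτ
  rw [csSup_le_iff hbdd hne]
  constructor
  · intro h
    refine Matrix.PosSemidef.of_dotProduct_mulVec_nonneg ?_ ?_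
    · rw [Matrix.IsHermitian]
      ext i j
      fin_cases i <;> fin_cases j <;>
        simp [Matrix.conjTranspose_apply, Matrix.one_apply, Matrix.vecMulVec_apply,
          Matrix.sub_apply, Matrix.add_apply, Matrix.smul_apply, he, mul_comm]
    · intro x
      have hs : ∀ ψ t0 t1 : ℝ, t0^2+t1^2 ≤ 1 →
          ε 0 0*(t0*t0)+ε 0 1*(t0*t1)+ε 1 0*(t1*t0)+ε 1 1*(t1*t1)
            +ψ*(ϑ 0*t0+ϑ 1*t1) ≤ 1+ψ^2 := by
        intro ψ t0 t1 ht
        have hx := h _ ⟨ψ, ![t0, t1], by rw [Fin.sum_univ_two]; simpa using ht, rfl⟩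
        rw [hfr, hdp] at hx
        rw [div_le_one (by positivity)] at hx
        simpa using hx
      have key := key_fwd (ε 0 0) (ε 0 1) (ε 1 0) (ε 1 1) (ϑ 0) (ϑ 1) hs (x 0) (x 1)
      simp only [dotProduct, Matrix.mulVec, Fin.sum_univ_two, Matrix.sub_apply,
        Matrix.add_apply, Matrix.smul_apply, Matrix.one_apply, Matrix.vecMulVec_apply,
        smul_eq_mul, Pi.star_apply, star_trivial]
      norm_num
      nlinarith [key]
  · intro hpsd x hx
    obtain ⟨ψ, τ, hτ, rfl⟩ := hx
    rw [Fin.sum_univ_two] at hτ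
    rw [hfr, hdp, div_le_one (by positivity)]
    have hq : ∀ x0 x1 : ℝ, ε 0 0*(x0*x0)+ε 0 1*(x0*x1)+ε 1 0*(x1*x0)+ε 1 1*(x1*x1)
        +(ϑ 0*x0+ϑ 1*x1)^2/4 ≤ x0^2+x1^2 := by
      intro x0 x1
      have := hpsd.dotProduct_mulVec_nonneg ![x0, x1]
      simp only [dotProduct, Matrix.mulVec, Fin.sum_univ_two, Matrix.sub_apply,
        Matrix.add_apply, Matrix.smul_apply, Matrix.one_apply, Matrix.vecMulVec_apply,
        smul_eq_mul, Pi.star_apply, star_trivial, Matrix.cons_val_zero, Matrix.cons_val_one,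
        Matrix.head_cons] at this
      norm_num at this
      nlinarith [this]
    exact key_bwd _ _ _ _ _ _ hq ψ (τ 0) (τ 1) hτ
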